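/- Suppose gcd(m/i, n/j) = t and ν has a generating sequence Q_0 = X, Q_1 = Y, Q_2, … in which every Q_l is an eigenfunction for H_{i,j,t,x}. Let ν̄ be the restriction of ν to the quotient field Q(A_{i,j,t,x}) of A_{i,j,t,x}, and let Γ_ν̄ be the value group of ν̄, i.e. the subgroup of ℚ generated by S^{(A_{i,j,t,x})_𝔫}(ν). If γ_0 = ν(X) ∈ Γ_ν̄, then m = i and t = 1. -/
import Mathlib


open MvPolynomial Finset Pointwise

noncomputable section

namespace DuttaPaper

/-- The polynomial ring `K[X,Y]`, with `X = X 0` and `Y = X 1`. -/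
abbrev Poly (K : Type) [Field K] : Type := MvPolynomial (Fin 2) K

/-- The rational function field `K(X,Y)`. -/
abbrev RF (K : Type) [Field K] : Type := FractionRing (Poly K)

variable {K : Type} [Field K]

/-- The `K`-algebra endomorphism of `K[X,Y]` sending `X ↦ u • X`, `Y ↦ v • Y`;
this is the action of `(u,v) ∈ 𝕌_m × 𝕌_n` on `K[X,Y]`. -/
def act (u v : K) : Poly K →ₐ[K] Poly K :=
  MvPolynomial.aeval ![MvPolynomial.C u * MvPolynomial.X 0,
    MvPolynomial.C v * MvPolynomial.X 1]

/-- Membership in the set `H_{i,j,t,x} = {(α^{a i}, β^{b j}) : b ≡ a x (mod t)} ⊆ K × K`. -/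
def Hmem (α β : K) (i j t x : ℕ) (p : K × K) : Prop :=
  ∃ a b : ℤ, b ≡ a * (x : ℤ) [ZMOD (t : ℤ)] ∧
    p = (α ^ (a * (i : ℤ)), β ^ (b * (j : ℤ)))

/-- `f ∈ K[X,Y]` is an eigenfunction for `H_{i,j,t,x}`. -/
def IsEigen (α β : K) (i j t x : ℕ) (f : Poly K) : Prop :=
  ∀ p : K × K, Hmem α β i j t x p → ∃ lam : K, act p.1 p.2 f = lam • f

/-- `f ∈ K[X,Y]` belongs to the invariant ring `A_{i,j,t,x} = K[X,Y]^{H_{i,j,t,x}}`. -/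
def Invariant (α β : K) (i j t x : ℕ) (f : Poly K) : Prop :=
  ∀ p : K × K, Hmem α β i j t x p → act p.1 p.2 f = f

/-- A `ℚ`-valued (rational rank 1) valuation on a field `L`: the data of the values of the
nonzero elements (the value of `0` is irrelevant). -/
structure RatVal (L : Type) [Field L] where
  v : L → ℚ
  v_mul : ∀ a b : L, a ≠ 0 → b ≠ 0 → v (a * b) = v a + v b
  v_add : ∀ a b : L, a ≠ 0 → b ≠ 0 → a + b ≠ 0 → min (v a) (v b) ≤ v (a + b)

/-- Value of a polynomial under a valuation of `K(X,Y)`. -/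
def vP (ν : RatVal (RF K)) (f : Poly K) : ℚ :=
  ν.v (algebraMap (Poly K) (RF K) f)

/-- `ν` dominates `R_𝔪 = K[X,Y]_{(X,Y)}` : `ν ≥ 0` on `R_𝔪` and `ν > 0` on its maximal
ideal (expressed on the level of polynomials). -/
def DominatesRm (ν : RatVal (RF K)) : Prop :=
  (∀ f : Poly K, f ≠ 0 → 0 ≤ vP ν f) ∧
  (∀ f : Poly K, f ≠ 0 → MvPolynomial.constantCoeff f = 0 → 0 < vP ν f)

/-- `ν` is non-discrete: its value group is not a cyclic subgroup of `ℚ`. -/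
def Nondiscrete (ν : RatVal (RF K)) : Prop :=
  ¬ ∃ g : ℚ, ∀ z : RF K, z ≠ 0 → ∃ k : ℤ, ν.v z = (k : ℚ) * g

/-- Data of a candidate generating sequence: the polynomials `Q_l` and the numbers `m̄_l`. -/
structure GSData (K : Type) [Field K] where
  Q : ℕ → Poly K
  mbar : ℕ → ℕ

/-- `γ_l = ν(Q_l)`. -/
def GSData.γ (G : GSData K) (ν : RatVal (RF K)) (l : ℕ) : ℚ := vP ν (G.Q l)

/-- `d(l) = m̄_1 ⋯ m̄_{l-1}` (so `d(1) = 1`). -/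
def GSData.d (G : GSData K) (l : ℕ) : ℕ := ∏ k ∈ Finset.Icc 1 (l - 1), G.mbar k

/-- An exponent vector `e` is admissible when `e k < m̄_k` for all `k ≥ 1`. -/
def Adm (G : GSData K) (e : ℕ →₀ ℕ) : Prop := ∀ k, 1 ≤ k → e k < G.mbar k

/-- The monomial `X^{e 0} Q_1^{e 1} Q_2^{e 2} ⋯` in the generating sequence. -/
def Pmon (G : GSData K) (e : ℕ →₀ ℕ) : Poly K := e.prod fun k a => G.Q k ^ a

/-- The value `Σ_k e k • γ_k` of such a monomial. -/
def evalγ (ν : RatVal (RF K)) (G : GSData K) (e : ℕ →₀ ℕ) : ℚ :=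
  e.sum fun k a => (a : ℚ) * G.γ ν k

/-- `(Q_l)_{l≥0}` is a generating sequence for `ν` in `K[X,Y]` (properties (1)–(4) of
Section 2 of the paper, for the algorithm of Cutkosky–Vinh). -/
structure IsGenSeq (ν : RatVal (RF K)) (G : GSData K) : Prop where
  hQ0 : G.Q 0 = MvPolynomial.X 0
  hQ1 : G.Q 1 = MvPolynomial.X 1
  /-- `m̄_l ≥ 1`. -/
  hmbar_pos : ∀ l, 1 ≤ l → 0 < G.mbar l
  /-- `m̄_l γ_l ∈ G(γ_0, …, γ_{l-1})`. -/
  hmbar_mem : ∀ l, 1 ≤ l → ∃ c : ℕ → ℤ,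
      (G.mbar l : ℚ) * G.γ ν l = ∑ k ∈ Finset.range l, (c k : ℚ) * G.γ ν k
  /-- `m̄_l` is minimal with this property. -/
  hmbar_min : ∀ l, 1 ≤ l → ∀ q : ℕ, 0 < q →
      (∃ c : ℕ → ℤ, (q : ℚ) * G.γ ν l = ∑ k ∈ Finset.range l, (c k : ℚ) * G.γ ν k) →
      G.mbar l ≤ q
  /-- (1) `γ_{l+1} > m̄_l γ_l`. -/
  hgrowth : ∀ l, 1 ≤ l → (G.mbar l : ℚ) * G.γ ν l < G.γ ν (l + 1)
  /-- (2) `Q_l = Y^{d(l)} + (terms of lower Y-degree)`. -/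
  hmonic : ∀ l, 1 ≤ l →
      G.Q l - MvPolynomial.X 1 ^ G.d l = 0 ∨
      MvPolynomial.degreeOf 1 (G.Q l - MvPolynomial.X 1 ^ G.d l) < G.d l
  /-- (3), existence and uniqueness of the expansion of any nonzero `f` in terms of the
  admissible monomials `X^{e 0} Q_1^{e 1} ⋯ Q_r^{e r}`, `e k < m̄_k` for `k ≥ 1`. -/
  hexpand : ∀ f : Poly K, f ≠ 0 →
      ∃! c : (ℕ →₀ ℕ) →₀ K,
        (∀ e ∈ c.support, Adm G e) ∧
        f = c.sum fun e a => MvPolynomial.C a * Pmon G e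
  /-- (3), the nonzero terms of the expansion have pairwise distinct values and
  `ν(f)` is the minimum of those values. -/
  hval : ∀ f : Poly K, f ≠ 0 → ∀ c : (ℕ →₀ ℕ) →₀ K,
      (∀ e ∈ c.support, Adm G e) →
      f = (c.sum fun e a => MvPolynomial.C a * Pmon G e) →
      (∀ e ∈ c.support, ∀ e' ∈ c.support, evalγ ν G e = evalγ ν G e' → e = e') ∧
      ∃ e₀ ∈ c.support, vP ν f = evalγ ν G e₀ ∧
        ∀ e ∈ c.support, evalγ ν G e₀ ≤ evalγ ν G e
  /-- (4) `Q_{l+1} = Q_l^{m̄_l} - λ_l X^{c_0} Y^{c_1} Q_2^{c_2} ⋯ Q_{l-1}^{c_{l-1}}` with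
  `0 ≤ c_k < m̄_k` for `k ≥ 1` and `m̄_l γ_l = Σ_{k<l} c_k γ_k`. -/
  hrec : ∀ l, 1 ≤ l → ∃ lam : K, lam ≠ 0 ∧ ∃ cc : ℕ → ℕ,
      (∀ k, 1 ≤ k → k < l → cc k < G.mbar k) ∧
      G.Q (l + 1) =
        G.Q l ^ G.mbar l - MvPolynomial.C lam * ∏ k ∈ Finset.range l, G.Q k ^ cc k ∧
      (G.mbar l : ℚ) * G.γ ν l = ∑ k ∈ Finset.range l, (cc k : ℚ) * G.γ ν k

/-- The valuation semigroup `S^{R_𝔪}(ν) = {ν(h) : 0 ≠ h ∈ R_𝔪}`. -/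
def SRm (ν : RatVal (RF K)) : Set ℚ :=
  {q | ∃ f g : Poly K, f ≠ 0 ∧ MvPolynomial.constantCoeff g ≠ 0 ∧
    q = vP ν f - vP ν g}

/-- The valuation semigroup `S^{(A_{i,j,t,x})_𝔫}(ν)` of the invariant ring localized at
`𝔫 = (X,Y) ∩ A_{i,j,t,x}`. -/
def SA (ν : RatVal (RF K)) (α β : K) (i j t x : ℕ) : Set ℚ :=
  {q | ∃ f g : Poly K, f ≠ 0 ∧ Invariant α β i j t x f ∧ Invariant α β i j t x g ∧
    MvPolynomial.constantCoeff g ≠ 0 ∧ q = vP ν f - vP ν g}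

/-- `S` is a finitely generated module over the subsemigroup `T`:
`S = {s_1, …, s_k} + T` for finitely many `s_i ∈ S`. -/
def FGover (S T : Set ℚ) : Prop :=
  ∃ F : Finset ℚ, (F : Set ℚ) ⊆ S ∧ S = (F : Set ℚ) + T

variable {K : Type} [Field K]

lemma act_comp (u v u' v' : K) (f : Poly K) :
    act u v (act u' v' f) = act (u * u') (v * v') f := by
  have h : (act u v).comp (act u' v') = act (u * u') (v * v') := by
    apply MvPolynomial.algHom_ext
    intro ii
    fin_cases ii <;> simp [act, mul_comm, mul_assoc, mul_left_comm]
  calc act u v (act u' v' f) = ((act u v).comp (act u' v')) f := rfl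
    _ = act (u * u') (v * v') f := by rw [h]

lemma act_id (f : Poly K) : act (1 : K) 1 f = f := by
  have h : act (1 : K) 1 = AlgHom.id K (Poly K) := by
    apply MvPolynomial.algHom_ext
    intro ii
    fin_cases ii <;> simp [act]
  rw [h]; rfl

lemma act_X0 (u v : K) : act u v (MvPolynomial.X 0) = MvPolynomial.C u * MvPolynomial.X 0 := by
  simp [act]

lemma act_inj {u v : K} (hu : u ≠ 0) (hv : v ≠ 0) {f : Poly K} (hf : act u v f = 0) :
    f = 0 := by
  have := act_comp u⁻¹ v⁻¹ u v f
  rw [hf, inv_mul_cancel₀ hu, inv_mul_cancel₀ hv, act_id] at this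
  simpa using this.symm

lemma algMap_ne {f : Poly K} (hf : f ≠ 0) : algebraMap (Poly K) (RF K) f ≠ 0 := by
  simpa using (map_ne_zero_iff _ (IsFractionRing.injective (Poly K) (RF K))).mpr hf

lemma vP_mul (ν : RatVal (RF K)) {f g : Poly K} (hf : f ≠ 0) (hg : g ≠ 0) :
    vP ν (f * g) = vP ν f + vP ν g := by
  unfold vP
  rw [map_mul]
  exact ν.v_mul _ _ (algMap_ne hf) (algMap_ne hg)

lemma vP_one (ν : RatVal (RF K)) : vP ν (1 : Poly K) = 0 := by
  have := vP_mul ν (one_ne_zero (α := Poly K)) (one_ne_zero (α := Poly K))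
  rw [one_mul] at this
  linarith

lemma vP_C (ν : RatVal (RF K)) (hdom : DominatesRm ν) {a : K} (ha : a ≠ 0) :
    vP ν (MvPolynomial.C a) = 0 := by
  have h1 : vP ν (MvPolynomial.C a) + vP ν (MvPolynomial.C a⁻¹) = 0 := by
    rw [← vP_mul ν (by simpa using ha) (by simpa using inv_ne_zero ha), ← map_mul,
      mul_inv_cancel₀ ha, map_one, vP_one]
  have h2 := hdom.1 _ (show (MvPolynomial.C a : Poly K) ≠ 0 by simpa using ha)
  have h3 := hdom.1 _ (show (MvPolynomial.C a⁻¹ : Poly K) ≠ 0 by simpa using inv_ne_zero ha)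
  linarith

lemma vP_smul (ν : RatVal (RF K)) (hdom : DominatesRm ν) {a : K} (ha : a ≠ 0)
    {f : Poly K} (hf : f ≠ 0) : vP ν (MvPolynomial.C a * f) = vP ν f := by
  rw [vP_mul ν (by simpa using ha) hf, vP_C ν hdom ha, zero_add]

lemma vP_pow (ν : RatVal (RF K)) {f : Poly K} (hf : f ≠ 0) (k : ℕ) :
    vP ν (f ^ k) = (k : ℚ) * vP ν f := by
  induction k with
  | zero => simpa using vP_one ν
  | succ k ih =>
    rw [pow_succ, vP_mul ν (pow_ne_zero _ hf) hf, ih]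
    push_cast; ring

lemma vP_prod (ν : RatVal (RF K)) {s : Finset ℕ} {f : ℕ → Poly K}
    (hf : ∀ k ∈ s, f k ≠ 0) : vP ν (∏ k ∈ s, f k) = ∑ k ∈ s, vP ν (f k) := by
  classical
  induction s using Finset.induction with
  | empty => simpa using vP_one ν
  | @insert a s' hx ih =>
    rw [Finset.prod_insert hx, Finset.sum_insert hx,
      vP_mul ν (hf a (Finset.mem_insert_self _ _))
        (Finset.prod_ne_zero_iff.mpr fun b hb => hf b (Finset.mem_insert_of_mem hb)),
      ih fun b hb => hf b (Finset.mem_insert_of_mem hb)]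

variable {ν : RatVal (RF K)} {G : GSData K}

lemma d_pos (hG : IsGenSeq ν G) (l : ℕ) : 0 < G.d l := by
  unfold GSData.d
  exact Finset.prod_pos fun k hk => hG.hmbar_pos k (Finset.mem_Icc.mp hk).1

lemma Q_ne (hG : IsGenSeq ν G) (l : ℕ) : G.Q l ≠ 0 := by
  rcases Nat.eq_zero_or_pos l with h | h
  · subst h; rw [hG.hQ0]; exact MvPolynomial.X_ne_zero 0
  rcases hG.hmonic l h with h1 | h1
  · rw [sub_eq_zero] at h1
    rw [h1]
    exact pow_ne_zero _ (MvPolynomial.X_ne_zero 1)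
  · intro h0
    rw [h0, zero_sub] at h1
    have hd : degreeOf (1 : Fin 2) (-(MvPolynomial.X 1 ^ G.d l : Poly K)) = G.d l := by
      rw [MvPolynomial.X_pow_eq_monomial]
      classical
      rw [MvPolynomial.degreeOf_def, MvPolynomial.degrees_neg,
        MvPolynomial.degrees_monomial_eq _ _ one_ne_zero, Finsupp.count_toMultiset]
      simp
    rw [hd] at h1
    exact lt_irrefl _ h1


lemma C_eq_zero' {a : K} (h : (MvPolynomial.C a : Poly K) = 0) : a = 0 := by
  have := MvPolynomial.C_injective (Fin 2) K (h.trans (map_zero _).symm)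
  simpa using this

lemma char_rel (hdom : DominatesRm ν) (hG : IsGenSeq ν G) {u v : K} {μ : ℕ → K}
    (hμ : ∀ l, act u v (G.Q l) = μ l • G.Q l) (hμne : ∀ l, μ l ≠ 0)
    (l : ℕ) (hl : 1 ≤ l) (lam : K) (hlam : lam ≠ 0) (cc : ℕ → ℕ)
    (hQrec : G.Q (l+1) =
      G.Q l ^ G.mbar l - MvPolynomial.C lam * ∏ k ∈ Finset.range l, G.Q k ^ cc k)
    (hccγ : (G.mbar l : ℚ) * G.γ ν l = ∑ k ∈ Finset.range l, (cc k : ℚ) * G.γ ν k) :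
    μ l ^ G.mbar l = ∏ k ∈ Finset.range l, μ k ^ cc k := by
  classical
  set A : Poly K := G.Q l ^ G.mbar l with hA
  set P : Poly K := ∏ k ∈ Finset.range l, G.Q k ^ cc k with hP
  set B : Poly K := MvPolynomial.C lam * P with hB
  have hPne : P ≠ 0 := Finset.prod_ne_zero_iff.mpr fun k _ => pow_ne_zero _ (Q_ne hG k)
  have hBne : B ≠ 0 := mul_ne_zero (by simpa using hlam) hPne
  set s : K := μ l ^ G.mbar l with hs
  set p : K := ∏ k ∈ Finset.range l, μ k ^ cc k with hp
  set w : K := μ (l+1) with hw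
  -- act on A
  have hactA : act u v A = MvPolynomial.C s * A := by
    rw [hA, map_pow, hμ l, MvPolynomial.smul_eq_C_mul, mul_pow, ← map_pow]
  -- act on B
  have hactB : act u v B = MvPolynomial.C p * B := by
    have h1 : act u v P = MvPolynomial.C p * P := by
      rw [hP, map_prod]
      have h2 : ∀ k ∈ Finset.range l, act u v (G.Q k ^ cc k) =
          MvPolynomial.C (μ k ^ cc k) * G.Q k ^ cc k := by
        intro k _
        rw [map_pow, hμ k, MvPolynomial.smul_eq_C_mul, mul_pow, ← map_pow]
      rw [Finset.prod_congr rfl h2, Finset.prod_mul_distrib, ← map_prod]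
    rw [hB, map_mul, h1]
    have : act u v (MvPolynomial.C lam) = MvPolynomial.C lam := by
      simp [act]
    rw [this]; ring
  have hactQ : act u v (G.Q (l+1)) = MvPolynomial.C w * G.Q (l+1) := by
    rw [hμ (l+1), MvPolynomial.smul_eq_C_mul]
  have hkey : (MvPolynomial.C w - MvPolynomial.C s) * A
      = (MvPolynomial.C w - MvPolynomial.C p) * B := by
    have h := hactQ
    rw [hQrec, map_sub, hactA, hactB] at h
    linear_combination -h
  have hkey2 : (MvPolynomial.C w - MvPolynomial.C s) * G.Q (l+1)
      = (MvPolynomial.C s - MvPolynomial.C p) * B := by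
    rw [hQrec]
    linear_combination hkey
  by_cases hws : w = s
  · rw [hws, sub_self, zero_mul] at hkey2
    rcases mul_eq_zero.mp hkey2.symm with h | h
    · refine sub_eq_zero.mp (C_eq_zero' (by rw [map_sub, h]))
    · exact absurd h hBne
  · exfalso
    have hwsne : (w - s : K) ≠ 0 := sub_ne_zero.mpr hws
    have hCws : (MvPolynomial.C w - MvPolynomial.C s : Poly K) = MvPolynomial.C (w - s) := by
      rw [map_sub]
    have hCsp : (MvPolynomial.C s - MvPolynomial.C p : Poly K) = MvPolynomial.C (s - p) := by
      rw [map_sub]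
    rw [hCws, hCsp] at hkey2
    have hspne : (s - p : K) ≠ 0 := by
      intro h0
      rw [h0, map_zero, zero_mul] at hkey2
      rcases mul_eq_zero.mp hkey2 with h | h
      · exact hwsne (C_eq_zero' h)
      · exact Q_ne hG (l+1) h
    have hvB : vP ν B = (G.mbar l : ℚ) * G.γ ν l := by
      rw [hB, vP_smul ν hdom hlam hPne, hP,
        vP_prod ν fun k _ => pow_ne_zero _ (Q_ne hG k), hccγ]
      exact Finset.sum_congr rfl fun k _ => by rw [vP_pow ν (Q_ne hG k)]; rfl
    have hvQ : vP ν (G.Q (l+1)) = (G.mbar l : ℚ) * G.γ ν l := by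
      have h1 := vP_smul ν hdom hwsne (Q_ne hG (l+1))
      have h2 := vP_smul ν hdom hspne hBne
      rw [hkey2] at h1
      rw [← h1, h2, hvB]
    have := hG.hgrowth l hl
    rw [show G.γ ν (l+1) = vP ν (G.Q (l+1)) from rfl, hvQ] at this
    exact lt_irrefl _ this

lemma key_rel (hdom : DominatesRm ν) (hG : IsGenSeq ν G) {u v : K} {μ : ℕ → K}
    (hμ : ∀ l, act u v (G.Q l) = μ l • G.Q l) (hμne : ∀ l, μ l ≠ 0)
    (hγ0 : G.γ ν 0 ≠ 0) :
    ∀ (l : ℕ) (M : ℕ → ℤ), (∑ k ∈ Finset.range l, (M k : ℚ) * G.γ ν k) = 0 →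
      ∏ k ∈ Finset.range l, μ k ^ M k = 1 := by
  intro l
  induction l with
  | zero => intro M _; simp
  | succ l ih =>
    intro M hM
    by_cases hMl : M l = 0
    · rw [Finset.sum_range_succ, hMl] at hM
      rw [Finset.prod_range_succ, hMl, zpow_zero, mul_one]
      exact ih M (by simpa using hM)
    · have hl : 1 ≤ l := by
        rcases Nat.eq_zero_or_pos l with h0 | h0
        · exfalso
          subst h0
          rw [Finset.sum_range_succ, Finset.sum_range_zero, zero_add] at hM
          rcases mul_eq_zero.mp hM with h | h
          · exact hMl (by exact_mod_cast h)
          · exact hγ0 h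
        · exact h0
      obtain ⟨lam, hlam, cc, hccb, hQrec, hccγ⟩ := hG.hrec l hl
      have hchar := char_rel hdom hG hμ hμne l hl lam hlam cc hQrec hccγ
      have hmb : (0:ℤ) < (G.mbar l : ℤ) := by exact_mod_cast hG.hmbar_pos l hl
      set q : ℤ := M l / (G.mbar l : ℤ) with hq
      set r : ℤ := M l % (G.mbar l : ℤ) with hr
      have hdecomp : (G.mbar l : ℤ) * q + r = M l := Int.mul_ediv_add_emod _ _
      have hr0 : 0 ≤ r := Int.emod_nonneg _ (by omega)
      have hrlt : r < (G.mbar l : ℤ) := Int.emod_lt_of_pos _ hmb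
      have hMsum : ∑ k ∈ Finset.range l, (M k : ℚ) * G.γ ν k
          = -((M l : ℚ) * G.γ ν l) := by
        rw [Finset.sum_range_succ] at hM
        linarith
      have hrΓ : (r : ℚ) * G.γ ν l =
          ∑ k ∈ Finset.range l, ((-(M k) - q * (cc k) : ℤ) : ℚ) * G.γ ν k := by
        have h1 : (r : ℚ) = (M l : ℚ) - (q : ℚ) * (G.mbar l : ℚ) := by
          push_cast [← hdecomp]; ring
        have h2 : ∑ k ∈ Finset.range l, ((-(M k) - q * (cc k) : ℤ) : ℚ) * G.γ ν k
            = -(∑ k ∈ Finset.range l, (M k : ℚ) * G.γ ν k)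
              - (q:ℚ) * ∑ k ∈ Finset.range l, ((cc k : ℚ)) * G.γ ν k := by
          rw [Finset.mul_sum, ← Finset.sum_neg_distrib, ← Finset.sum_sub_distrib]
          apply Finset.sum_congr rfl
          intro k _
          push_cast
          ring
        rw [h2, ← hccγ, hMsum, h1]
        ring
      have hrz : r = 0 := by
        by_contra hrne
        have hle := hG.hmbar_min l hl r.toNat (by omega)
          ⟨fun k => -(M k) - q * (cc k), by
            have hcast : ((r.toNat : ℕ) : ℚ) = (r : ℚ) := by
              exact_mod_cast congrArg (fun z : ℤ => (z : ℚ)) (Int.toNat_of_nonneg hr0)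
            rw [hcast, hrΓ]⟩
        omega
      have hMleq : (M l : ℚ) = (G.mbar l : ℚ) * (q : ℚ) := by
        push_cast [← hdecomp, hrz]; ring
      -- new coefficient vector
      set M' : ℕ → ℤ := fun k => M k + q * (cc k) with hM'
      have hsum' : ∑ k ∈ Finset.range l, ((M' k : ℤ) : ℚ) * G.γ ν k = 0 := by
        have h2 : ∑ k ∈ Finset.range l, ((M' k : ℤ) : ℚ) * G.γ ν k
            = (∑ k ∈ Finset.range l, (M k : ℚ) * G.γ ν k)
              + (q:ℚ) * ∑ k ∈ Finset.range l, ((cc k : ℚ)) * G.γ ν k := by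
          rw [Finset.mul_sum, ← Finset.sum_add_distrib]
          apply Finset.sum_congr rfl
          intro k _
          simp only [hM']
          push_cast
          ring
        rw [h2, ← hccγ, hMsum, hMleq]
        ring
      have hprod' := ih M' hsum'
      have hccne : (∏ k ∈ Finset.range l, μ k ^ cc k) ≠ 0 :=
        Finset.prod_ne_zero_iff.mpr fun k _ => pow_ne_zero _ (hμne k)
      have hfac : ∏ k ∈ Finset.range l, μ k ^ M k
          = (∏ k ∈ Finset.range l, μ k ^ M' k)
            * ((∏ k ∈ Finset.range l, μ k ^ cc k) ^ q)⁻¹ := by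
        rw [← Finset.prod_zpow, ← Finset.prod_inv_distrib, ← Finset.prod_mul_distrib]
        apply Finset.prod_congr rfl
        intro k _
        have : M k = M' k - cc k * q := by simp only [hM']; ring
        rw [this, zpow_sub₀ (hμne k), zpow_mul, zpow_natCast, div_eq_mul_inv]
      have hMl' : μ l ^ M l = (∏ k ∈ Finset.range l, μ k ^ cc k) ^ q := by
        have : M l = (G.mbar l : ℤ) * q := by omega
        rw [this, zpow_mul, zpow_natCast, hchar]
      rw [Finset.prod_range_succ, hfac, hprod', one_mul, hMl',
        inv_mul_cancel₀ (zpow_ne_zero _ hccne)]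

lemma act_Pmon {u v : K} {μ : ℕ → K} (hμ : ∀ l, act u v (G.Q l) = μ l • G.Q l)
    (e : ℕ →₀ ℕ) :
    act u v (Pmon G e) = MvPolynomial.C (e.prod fun k a => μ k ^ a) * Pmon G e := by
  classical
  unfold Pmon Finsupp.prod
  rw [map_prod]
  have h2 : ∀ k ∈ e.support, act u v (G.Q k ^ e k)
      = MvPolynomial.C (μ k ^ e k) * G.Q k ^ e k := by
    intro k _
    rw [map_pow, hμ k, MvPolynomial.smul_eq_C_mul, mul_pow, ← map_pow]
  rw [Finset.prod_congr rfl h2, Finset.prod_mul_distrib, ← map_prod]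

lemma inv_val (hG : IsGenSeq ν G) {u v : K} {μ : ℕ → K}
    (hμ : ∀ l, act u v (G.Q l) = μ l • G.Q l) (hμne : ∀ l, μ l ≠ 0)
    {f : Poly K} (hf : f ≠ 0) (hfix : act u v f = f) :
    ∃ e : ℕ →₀ ℕ, vP ν f = evalγ ν G e ∧ (e.prod fun k a => μ k ^ a) = 1 := by
  classical
  obtain ⟨c, ⟨hcadm, hcsum⟩, hcuniq⟩ := hG.hexpand f hf
  set χ : (ℕ →₀ ℕ) → K := fun e => e.prod fun k a => μ k ^ a with hχ
  have hχne : ∀ e, χ e ≠ 0 := by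
    intro e
    exact Finset.prod_ne_zero_iff.mpr fun k _ => pow_ne_zero _ (hμne k)
  set c' : (ℕ →₀ ℕ) →₀ K := Finsupp.onFinset c.support (fun e => χ e * c e)
    (fun e h => Finsupp.mem_support_iff.mpr fun h0 => h (by simp [h0])) with hc'
  have hsupp' : c'.support ⊆ c.support := Finsupp.support_onFinset_subset
  have happ' : ∀ e, c' e = χ e * c e := fun e => Finsupp.onFinset_apply
  have h2' : f = c'.sum fun e a => MvPolynomial.C a * Pmon G e := by
    have hexp : (c'.sum fun e a => MvPolynomial.C a * Pmon G e)
        = ∑ e ∈ c.support, MvPolynomial.C (c' e) * Pmon G e :=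
      Finsupp.sum_of_support_subset c' hsupp' _ (fun e _ => by rw [map_zero, zero_mul])
    rw [hexp]
    conv_lhs => rw [← hfix, hcsum]
    unfold Finsupp.sum
    rw [map_sum]
    apply Finset.sum_congr rfl
    intro e _
    rw [map_mul, act_Pmon hμ e, happ' e]
    have hCa : act u v (MvPolynomial.C (c e)) = MvPolynomial.C (c e) := by
      simp [act]
    rw [hCa, map_mul]
    ring
  have hcc' : c' = c := hcuniq c' ⟨fun e he => hcadm e (hsupp' he), h2'⟩
  obtain ⟨_, e₀, he₀, hv₀, _⟩ := hG.hval f hf c hcadm hcsum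
  refine ⟨e₀, hv₀, ?_⟩
  have h3 : χ e₀ * c e₀ = c e₀ := by
    conv_rhs => rw [← hcc']
    rw [happ' e₀]
  have h4 : c e₀ ≠ 0 := Finsupp.mem_support_iff.mp he₀
  have := mul_right_cancel₀ h4 (h3.trans (one_mul (c e₀)).symm)
  exact this

lemma pad_sum (γ : ℕ → ℚ) (M : ℕ → ℤ) {l L : ℕ} (h : l ≤ L) :
    ∑ k ∈ Finset.range L, ((if k < l then M k else 0 : ℤ) : ℚ) * γ k
      = ∑ k ∈ Finset.range l, (M k : ℚ) * γ k := by
  have h1 : ∑ k ∈ Finset.range l, ((if k < l then M k else 0 : ℤ) : ℚ) * γ k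
      = ∑ k ∈ Finset.range L, ((if k < l then M k else 0 : ℤ) : ℚ) * γ k :=
    Finset.sum_subset (Finset.range_subset_range.mpr h) (fun y _ hy => by
      rw [if_neg (fun hc => hy (Finset.mem_range.mpr hc))]; simp)
  rw [← h1]
  apply Finset.sum_congr rfl
  intro k hk
  rw [if_pos (Finset.mem_range.mp hk)]

lemma pad_prod (μ : ℕ → K) (M : ℕ → ℤ) {l L : ℕ} (h : l ≤ L) :
    ∏ k ∈ Finset.range L, μ k ^ (if k < l then M k else 0)
      = ∏ k ∈ Finset.range l, μ k ^ M k := by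
  have h1 : ∏ k ∈ Finset.range l, μ k ^ (if k < l then M k else 0)
      = ∏ k ∈ Finset.range L, μ k ^ (if k < l then M k else 0) :=
    Finset.prod_subset (Finset.range_subset_range.mpr h) (fun y _ hy => by
      rw [if_neg (fun hc => hy (Finset.mem_range.mpr hc))]; simp)
  rw [← h1]
  apply Finset.prod_congr rfl
  intro k hk
  rw [if_pos (Finset.mem_range.mp hk)]

theorem stmt_18 (K : Type) [Field K] [IsAlgClosed K] [CharZero K]
    (m n : ℕ) (hm : 0 < m) (hn : 0 < n) (α β : K)
    (hα : IsPrimitiveRoot α m) (hβ : IsPrimitiveRoot β n)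
    (i j t x : ℕ) (hi : 0 < i) (hj : 0 < j) (ht : 0 < t)
    (him : i ∣ m) (hjn : j ∣ n) (hti : t ∣ m / i) (htj : t ∣ n / j)
    (hxt : Nat.gcd x t = 1) (hx1 : 1 ≤ x) (hxle : x ≤ t)
    (ν : RatVal (RF K)) (hdom : DominatesRm ν) (hnd : Nondiscrete ν)
    (G : GSData K) (hG : IsGenSeq ν G)
    (heig : ∀ l, IsEigen α β i j t x (G.Q l))
    (hgcd : Nat.gcd (m / i) (n / j) = t)
    (hmem : G.γ ν 0 ∈ AddSubgroup.closure (SA ν α β i j t x)) :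
    m = i ∧ t = 1 := by
  classical
  set u : K := α ^ i with hu
  set v : K := β ^ (x * j) with hv
  have hmemH : Hmem α β i j t x (u, v) := by
    refine ⟨1, (x : ℤ), by rw [one_mul], ?_⟩
    have h1 : α ^ ((1 : ℤ) * (i : ℤ)) = u := by
      rw [one_mul, zpow_natCast]
    have h2 : β ^ ((x : ℤ) * (j : ℤ)) = v := by
      rw [hv, ← zpow_natCast β (x * j)]
      push_cast
      ring_nf
    rw [h1, h2]
  have hune : u ≠ 0 := pow_ne_zero _ (hα.ne_zero hm.ne')
  have hvne : v ≠ 0 := pow_ne_zero _ (hβ.ne_zero hn.ne')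
  set μ : ℕ → K := fun l => Classical.choose (heig l (u, v) hmemH) with hμdef
  have hμ : ∀ l, act u v (G.Q l) = μ l • G.Q l :=
    fun l => Classical.choose_spec (heig l (u, v) hmemH)
  have hμne : ∀ l, μ l ≠ 0 := by
    intro l h0
    have h1 := hμ l
    rw [h0, zero_smul] at h1
    exact Q_ne hG l (act_inj hune hvne h1)
  have hγpos : 0 < G.γ ν 0 := by
    have h1 : G.γ ν 0 = vP ν (MvPolynomial.X 0) := by
      rw [show G.γ ν 0 = vP ν (G.Q 0) from rfl, hG.hQ0]
    rw [h1]
    exact hdom.2 _ (MvPolynomial.X_ne_zero 0) (by simp)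
  -- predicate P
  set Pq : ℚ → Prop := fun q => ∃ (l : ℕ) (M : ℕ → ℤ),
      q = ∑ k ∈ Finset.range l, (M k : ℚ) * G.γ ν k ∧
      ∏ k ∈ Finset.range l, μ k ^ M k = 1 with hPq
  have eP : ∀ e : ℕ →₀ ℕ, (e.prod fun k a => μ k ^ a) = 1 → Pq (evalγ ν G e) := by
    intro e he
    set l := e.support.sup id + 1 with hldef
    have hsubset : e.support ⊆ Finset.range l := fun k hk =>
      Finset.mem_range.mpr (Nat.lt_succ_of_le (Finset.le_sup (f := id) hk))
    refine ⟨l, fun k => (e k : ℤ), ?_, ?_⟩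
    · have h1 : evalγ ν G e = ∑ k ∈ Finset.range l, ((e k : ℕ) : ℚ) * G.γ ν k := by
        unfold evalγ
        exact Finsupp.sum_of_support_subset e hsubset
          (fun k a => (a : ℚ) * G.γ ν k) (by intro k _; simp)
      rw [h1]
      push_cast
      rfl
    · have h1 : (e.prod fun k a => μ k ^ a) = ∏ k ∈ Finset.range l, μ k ^ (e k) :=
        Finsupp.prod_of_support_subset e hsubset
          (fun k a => μ k ^ a) (by intro k _; simp)
      rw [← he, h1]
      apply Finset.prod_congr rfl
      intro k _
      rw [zpow_natCast]
  have Padd : ∀ a b : ℚ, Pq a → Pq b → Pq (a + b) := by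
    rintro a b ⟨l1, M1, ha, ha'⟩ ⟨l2, M2, hb, hb'⟩
    refine ⟨max l1 l2, fun k => (if k < l1 then M1 k else 0) + (if k < l2 then M2 k else 0),
      ?_, ?_⟩
    · rw [ha, hb, ← pad_sum (G.γ ν) M1 (le_max_left l1 l2),
        ← pad_sum (G.γ ν) M2 (le_max_right l1 l2), ← Finset.sum_add_distrib]
      apply Finset.sum_congr rfl
      intro k _
      push_cast
      ring
    · have hsplit : ∏ k ∈ Finset.range (max l1 l2),
          μ k ^ ((if k < l1 then M1 k else 0) + (if k < l2 then M2 k else 0))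
          = (∏ k ∈ Finset.range l1, μ k ^ M1 k) * ∏ k ∈ Finset.range l2, μ k ^ M2 k := by
        rw [← pad_prod μ M1 (le_max_left l1 l2), ← pad_prod μ M2 (le_max_right l1 l2),
          ← Finset.prod_mul_distrib]
        exact Finset.prod_congr rfl fun k _ => zpow_add₀ (hμne k) _ _
      rw [hsplit, ha', hb', one_mul]
  have Pneg : ∀ a : ℚ, Pq a → Pq (-a) := by
    rintro a ⟨l1, M1, ha, ha'⟩
    refine ⟨l1, fun k => -(M1 k), ?_, ?_⟩
    · rw [ha, ← Finset.sum_neg_distrib]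
      apply Finset.sum_congr rfl
      intro k _
      push_cast
      ring
    · have hsplit : ∏ k ∈ Finset.range l1, μ k ^ (-(M1 k))
          = (∏ k ∈ Finset.range l1, μ k ^ M1 k)⁻¹ := by
        rw [← Finset.prod_inv_distrib]
        exact Finset.prod_congr rfl fun k _ => zpow_neg _ _
      rw [hsplit, ha', inv_one]
  have hP : Pq (G.γ ν 0) := by
    refine AddSubgroup.closure_induction (p := fun q _ => Pq q) ?_ ?_ ?_ ?_ hmem
    · rintro q ⟨f, g, hf, hfinv, hginv, hg0, hqe⟩
      have hg : g ≠ 0 := fun h => hg0 (by rw [h]; simp)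
      obtain ⟨e₁, he₁, he₁'⟩ := inv_val hG hμ hμne hf (hfinv (u, v) hmemH)
      obtain ⟨e₂, he₂, he₂'⟩ := inv_val hG hμ hμne hg (hginv (u, v) hmemH)
      rw [hqe, he₁, he₂, sub_eq_add_neg]
      exact Padd _ _ (eP e₁ he₁') (Pneg _ (eP e₂ he₂'))
    · exact ⟨0, fun _ => 0, by simp, by simp⟩
    · exact fun a b _ _ hpa hpb => Padd a b hpa hpb
    · exact fun a _ hpa => Pneg a hpa
  obtain ⟨l, M, hsum, hprod⟩ := hP
  have hl : 1 ≤ l := by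
    by_contra hc
    have : l = 0 := by omega
    rw [this, Finset.sum_range_zero] at hsum
    exact absurd hsum (ne_of_gt hγpos)
  set M' : ℕ → ℤ := fun k => M k - (if k = 0 then 1 else 0) with hM'
  have hsum' : ∑ k ∈ Finset.range l, (M' k : ℚ) * G.γ ν k = 0 := by
    have hδ : ∑ k ∈ Finset.range l, (((if k = 0 then 1 else 0) : ℤ) : ℚ) * G.γ ν k
        = G.γ ν 0 := by
      have h1 : ∀ k ∈ Finset.range l, (((if k = 0 then 1 else 0) : ℤ) : ℚ) * G.γ ν k
          = if k = 0 then G.γ ν k else 0 := by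
        intro k _
        split <;> simp
      rw [Finset.sum_congr rfl h1, Finset.sum_ite_eq' (Finset.range l) 0 (G.γ ν),
        if_pos (Finset.mem_range.mpr hl)]
    have h2 : ∑ k ∈ Finset.range l, (M' k : ℚ) * G.γ ν k
        = (∑ k ∈ Finset.range l, (M k : ℚ) * G.γ ν k)
          - ∑ k ∈ Finset.range l, (((if k = 0 then 1 else 0) : ℤ) : ℚ) * G.γ ν k := by
      rw [← Finset.sum_sub_distrib]
      apply Finset.sum_congr rfl
      intro k _
      simp only [hM']
      push_cast
      ring
    rw [h2, hδ, ← hsum]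
    ring
  have hkr := key_rel hdom hG hμ hμne (ne_of_gt hγpos) l M' hsum'
  have hμ0 : μ 0 = 1 := by
    have hδ : ∏ k ∈ Finset.range l, μ k ^ ((if k = 0 then 1 else 0) : ℤ) = μ 0 := by
      have h1 : ∀ k ∈ Finset.range l, μ k ^ ((if k = 0 then 1 else 0) : ℤ)
          = if k = 0 then μ k else 1 := by
        intro k _
        split <;> simp
      rw [Finset.prod_congr rfl h1, Finset.prod_ite_eq' (Finset.range l) 0 μ,
        if_pos (Finset.mem_range.mpr hl)]
    have h2 : ∏ k ∈ Finset.range l, μ k ^ M' k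
        = (∏ k ∈ Finset.range l, μ k ^ M k)
          * (∏ k ∈ Finset.range l, μ k ^ ((if k = 0 then 1 else 0) : ℤ))⁻¹ := by
      rw [← Finset.prod_inv_distrib, ← Finset.prod_mul_distrib]
      apply Finset.prod_congr rfl
      intro k _
      rw [show M' k = M k - (if k = 0 then 1 else 0) from rfl,
        zpow_sub₀ (hμne k), div_eq_mul_inv]
    rw [hkr, hprod, one_mul, hδ] at h2
    exact (inv_eq_one.mp h2.symm)
  -- μ 0 = u
  have hu1 : u = 1 := by
    have h1 := hμ 0
    rw [hG.hQ0, act_X0, hμ0, one_smul] at h1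
    have h2 : (MvPolynomial.C u - 1) * MvPolynomial.X 0 = (0 : Poly K) := by
      rw [sub_mul, one_mul, h1, sub_self]
    rcases mul_eq_zero.mp h2 with h | h
    · have h3 : MvPolynomial.C (u - 1) = (0 : Poly K) := by
        rw [map_sub, map_one]
        exact h
      exact sub_eq_zero.mp (C_eq_zero' h3)
    · exact absurd h (MvPolynomial.X_ne_zero 0)
  have hαi : α ^ i = 1 := hu1
  have hmi : m ∣ i := (hα.pow_eq_one_iff_dvd i).mp hαi
  have hmieq : m = i := Nat.dvd_antisymm hmi him
  refine ⟨hmieq, ?_⟩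
  have : m / i = 1 := by
    rw [← hmieq, Nat.div_self hm]
  rw [this] at hti
  exact Nat.dvd_one.mp hti
end DuttaPaper
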